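/- If a : ℕ → ℝ is a Hamburger moment sequence satisfying |a_n| ≤ A·B^n for all n ≥ 0, for some constants A, B < ∞, then the representing measure μ is unique and is supported on [−B, B]; that is, any positive Borel measure μ on ℝ with ∫ x^n dμ(x) = a_n for all n is supported on [−B,B], and any two such measures are equal. -/

import Mathlib

open MeasureTheory

private lemma hb_finite (μ : Measure ℝ)
    (hint : ∀ n : ℕ, Integrable (fun x : ℝ => x ^ n) μ) : IsFiniteMeasure μ := by
  have h1 : Integrable (fun _ : ℝ => (1 : ℝ)) μ := by simpa using hint 0
  constructor
  rcases integrable_const_iff.mp h1 with h | h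
  · exact absurd h one_ne_zero
  · exact h.measure_univ_lt_top

private lemma hb_support (a : ℕ → ℝ) (A B : ℝ)
    (hbound : ∀ n : ℕ, |a n| ≤ A * B ^ n)
    (μ : Measure ℝ) (hint : ∀ n : ℕ, Integrable (fun x : ℝ => x ^ n) μ)
    (hmom : ∀ n : ℕ, a n = ∫ x : ℝ, x ^ n ∂μ) :
    μ (Set.Icc (-B) B)ᶜ = 0 := by
  haveI : IsFiniteMeasure μ := hb_finite μ hint
  have hA : 0 ≤ A := le_trans (abs_nonneg _) (by simpa using hbound 0)
  rcases lt_or_ge B 0 with hB | hB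
  · -- B < 0 forces A = 0, hence μ = 0
    have hAB : (0 : ℝ) ≤ A * B := le_trans (abs_nonneg _) (by simpa using hbound 1)
    have hA0 : A = 0 := by nlinarith
    have ha0 : a 0 = 0 := by
      have h := hbound 0
      rw [hA0] at h
      simpa using abs_eq_zero.mp (le_antisymm (by simpa using h) (abs_nonneg _))
    have hone : (μ Set.univ).toReal = 0 := by
      have h := (hmom 0).symm.trans ha0
      simpa [integral_const, Measure.real] using h
    have huniv : μ Set.univ = 0 := by
      rcases ENNReal.toReal_eq_zero_iff _ |>.mp hone with h | h
      · exact h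
      · exact absurd h (measure_ne_top μ _)
    exact measure_mono_null (Set.subset_univ _) huniv
  · -- B ≥ 0 : Chebyshev-type argument with even moments
    have key : ∀ ε : ℝ, 0 < ε → μ {x : ℝ | B + ε ≤ |x|} = 0 := by
      intro ε hε
      set c : ℝ := B + ε with hc_def
      have hc : 0 < c := by linarith
      set S : Set ℝ := {x : ℝ | c ≤ |x|} with hS_def
      have hSm : MeasurableSet S := measurableSet_le measurable_const continuous_abs.measurable
      have hμS : ∀ k : ℕ, (μ S).toReal ≤ A * ((B / c) ^ 2) ^ k := by
        intro k
        have hle : ∀ x ∈ S, c ^ (2 * k) ≤ x ^ (2 * k) := by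
          intro x hx
          have h1 : c ^ (2 * k) ≤ |x| ^ (2 * k) := pow_le_pow_left₀ hc.le hx _
          calc c ^ (2 * k) ≤ |x| ^ (2 * k) := h1
            _ = (|x| ^ 2) ^ k := by rw [pow_mul]
            _ = (x ^ 2) ^ k := by rw [sq_abs]
            _ = x ^ (2 * k) := by rw [← pow_mul]
        have h2 : c ^ (2 * k) * (μ S).toReal ≤ ∫ x in S, x ^ (2 * k) ∂μ :=
          by have := setIntegral_ge_of_const_le hSm (measure_ne_top μ S) hle (hint (2 * k)).integrableOn; rw [smul_eq_mul, mul_comm] at this; exact this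
        have h3 : ∫ x in S, x ^ (2 * k) ∂μ ≤ ∫ x : ℝ, x ^ (2 * k) ∂μ :=
          setIntegral_le_integral (hint (2 * k))
            (Filter.Eventually.of_forall fun x => (even_two_mul k).pow_nonneg x)
        have h4 : ∫ x : ℝ, x ^ (2 * k) ∂μ ≤ A * B ^ (2 * k) := by
          rw [← hmom (2 * k)]
          exact (le_abs_self _).trans (hbound (2 * k))
        have hcpow : (0 : ℝ) < c ^ (2 * k) := pow_pos hc _
        have h5 : (μ S).toReal ≤ A * B ^ (2 * k) / c ^ (2 * k) := by
          rw [le_div_iff₀ hcpow]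
          calc (μ S).toReal * c ^ (2 * k) = c ^ (2 * k) * (μ S).toReal := mul_comm _ _
            _ ≤ ∫ x in S, x ^ (2 * k) ∂μ := h2
            _ ≤ ∫ x : ℝ, x ^ (2 * k) ∂μ := h3
            _ ≤ A * B ^ (2 * k) := h4
        calc (μ S).toReal ≤ A * B ^ (2 * k) / c ^ (2 * k) := h5
          _ = A * (B / c) ^ (2 * k) := by rw [div_pow, mul_div_assoc]
          _ = A * ((B / c) ^ 2) ^ k := by rw [pow_mul]
      have hr0 : 0 ≤ B / c := div_nonneg hB hc.le
      have hr1 : (B / c) ^ 2 < 1 := by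
        have : B / c < 1 := (div_lt_one hc).mpr (by linarith)
        nlinarith
      have htend : Filter.Tendsto (fun k : ℕ => A * ((B / c) ^ 2) ^ k)
          Filter.atTop (nhds 0) := by
        have := (tendsto_pow_atTop_nhds_zero_of_lt_one (by positivity) hr1).const_mul A
        simpa using this
      have hle0 : (μ S).toReal ≤ 0 := ge_of_tendsto' htend hμS
      have hEq : (μ S).toReal = 0 := le_antisymm hle0 ENNReal.toReal_nonneg
      rcases ENNReal.toReal_eq_zero_iff _ |>.mp hEq with h | h
      · exact h
      · exact absurd h (measure_ne_top μ _)
    have hsub : (Set.Icc (-B) B)ᶜ ⊆ ⋃ n : ℕ, {x : ℝ | B + 1 / (n + 1) ≤ |x|} := by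
      intro x hx
      simp only [Set.mem_compl_iff, Set.mem_Icc, not_and_or, not_le] at hx
      have habs : B < |x| := by
        rcases hx with h | h
        · calc B < -x := by linarith
            _ ≤ |x| := neg_le_abs x
        · exact lt_of_lt_of_le h (le_abs_self x)
      obtain ⟨n, hn⟩ := exists_nat_one_div_lt (sub_pos.mpr habs)
      exact Set.mem_iUnion.mpr ⟨n, by simp only [Set.mem_setOf_eq]; push_cast; linarith⟩
    exact measure_mono_null hsub
      (measure_iUnion_null fun n => key (1 / (n + 1)) (by positivity))

private lemma hb_integrable_poly (μ : Measure ℝ)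
    (hint : ∀ n : ℕ, Integrable (fun x : ℝ => x ^ n) μ) (p : Polynomial ℝ) :
    Integrable (fun x : ℝ => p.eval x) μ := by
  have hev : ∀ x : ℝ,
      p.eval x = ∑ i ∈ Finset.range (p.natDegree + 1), p.coeff i * x ^ i :=
    fun x => Polynomial.eval_eq_sum_range x
  simp_rw [hev]
  exact integrable_finset_sum _ fun i _ => (hint i).const_mul _

private lemma hb_integral_poly_eq (μ ν : Measure ℝ)
    (hiμ : ∀ n : ℕ, Integrable (fun x : ℝ => x ^ n) μ)
    (hiν : ∀ n : ℕ, Integrable (fun x : ℝ => x ^ n) ν)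
    (hm : ∀ n : ℕ, ∫ x : ℝ, x ^ n ∂μ = ∫ x : ℝ, x ^ n ∂ν) (p : Polynomial ℝ) :
    ∫ x : ℝ, p.eval x ∂μ = ∫ x : ℝ, p.eval x ∂ν := by
  have hev : ∀ x : ℝ,
      p.eval x = ∑ i ∈ Finset.range (p.natDegree + 1), p.coeff i * x ^ i :=
    fun x => Polynomial.eval_eq_sum_range x
  simp_rw [hev]
  rw [integral_finset_sum _ fun i _ => (hiμ i).const_mul _,
    integral_finset_sum _ fun i _ => (hiν i).const_mul _]
  refine Finset.sum_congr rfl fun i _ => ?_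
  rw [integral_const_mul, integral_const_mul, hm i]

private lemma hb_integral_eq (B : ℝ) (μ ν : Measure ℝ)
    [IsFiniteMeasure μ] [IsFiniteMeasure ν]
    (hμK : μ (Set.Icc (-B) B)ᶜ = 0) (hνK : ν (Set.Icc (-B) B)ᶜ = 0)
    (hiμ : ∀ n : ℕ, Integrable (fun x : ℝ => x ^ n) μ)
    (hiν : ∀ n : ℕ, Integrable (fun x : ℝ => x ^ n) ν)
    (hm : ∀ n : ℕ, ∫ x : ℝ, x ^ n ∂μ = ∫ x : ℝ, x ^ n ∂ν)
    (g : ℝ → ℝ) (hg : Continuous g) (hgμ : Integrable g μ) (hgν : Integrable g ν) :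
    ∫ x, g x ∂μ = ∫ x, g x ∂ν := by
  set K : Set ℝ := Set.Icc (-B) B with hK_def
  have hrμ : μ.restrict K = μ :=
    Measure.restrict_eq_self_of_ae_mem (mem_ae_iff.mpr hμK)
  have hrν : ν.restrict K = ν :=
    Measure.restrict_eq_self_of_ae_mem (mem_ae_iff.mpr hνK)
  set D : ℝ := (∫ x, g x ∂μ) - ∫ x, g x ∂ν with hD_def
  set C : ℝ := (μ K).toReal + (ν K).toReal with hC_def
  have hC : 0 ≤ C := by positivity
  have key : ∀ ε : ℝ, 0 < ε → |D| ≤ ε * C := by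
    intro ε hε
    obtain ⟨p, hp⟩ := exists_polynomial_near_of_continuousOn (-B) B g hg.continuousOn ε hε
    have hpμ : Integrable (fun x : ℝ => p.eval x) μ := hb_integrable_poly μ hiμ p
    have hpν : Integrable (fun x : ℝ => p.eval x) ν := hb_integrable_poly ν hiν p
    have hpp : ∫ x : ℝ, p.eval x ∂μ = ∫ x : ℝ, p.eval x ∂ν :=
      hb_integral_poly_eq μ ν hiμ hiν hm p
    have hbd : ∀ x ∈ K, ‖g x - p.eval x‖ ≤ ε := by
      intro x hx
      rw [Real.norm_eq_abs, abs_sub_comm]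
      exact (hp x hx).le
    have hdμ : |(∫ x, g x ∂μ) - ∫ x : ℝ, p.eval x ∂μ| ≤ ε * (μ K).toReal := by
      rw [← integral_sub hgμ hpμ]
      calc |∫ x, (g x - p.eval x) ∂μ| = |∫ x in K, (g x - p.eval x) ∂μ| := by rw [hrμ]
        _ ≤ ε * (μ K).toReal := by
            exact norm_setIntegral_le_of_norm_le_const (measure_lt_top μ K) hbd
    have hdν : |(∫ x, g x ∂ν) - ∫ x : ℝ, p.eval x ∂ν| ≤ ε * (ν K).toReal := by
      rw [← integral_sub hgν hpν]
      calc |∫ x, (g x - p.eval x) ∂ν| = |∫ x in K, (g x - p.eval x) ∂ν| := by rw [hrν]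
        _ ≤ ε * (ν K).toReal := by
            exact norm_setIntegral_le_of_norm_le_const (measure_lt_top ν K) hbd
    calc |D| = |((∫ x, g x ∂μ) - ∫ x : ℝ, p.eval x ∂μ)
          + ((∫ x : ℝ, p.eval x ∂ν) - ∫ x, g x ∂ν)| := by
            rw [hD_def, ← hpp]; congr 1; ring
      _ ≤ |(∫ x, g x ∂μ) - ∫ x : ℝ, p.eval x ∂μ|
          + |(∫ x : ℝ, p.eval x ∂ν) - ∫ x, g x ∂ν| := abs_add_le _ _
      _ = |(∫ x, g x ∂μ) - ∫ x : ℝ, p.eval x ∂μ|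
          + |(∫ x, g x ∂ν) - ∫ x : ℝ, p.eval x ∂ν| := by
            rw [abs_sub_comm (∫ x : ℝ, p.eval x ∂ν)]
      _ ≤ ε * (μ K).toReal + ε * (ν K).toReal := add_le_add hdμ hdν
      _ = ε * C := by rw [hC_def]; ring
  have habs : |D| ≤ 0 := by
    refine le_of_forall_pos_le_add fun ε hε => ?_
    have h := key (ε / (C + 1)) (by positivity)
    have : ε / (C + 1) * C ≤ ε := by
      rw [div_mul_eq_mul_div, div_le_iff₀ (by linarith)]
      nlinarith
    linarith
  have : D = 0 := abs_eq_zero.mp (le_antisymm habs (abs_nonneg _))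
  exact sub_eq_zero.mp this

/-- If `a` is a Hamburger moment sequence with `|a_n| ≤ A·B^n`, then every
representing measure is supported on `[-B, B]`, and any two representing
measures are equal. -/
theorem hamburger_bounded_unique_support (a : ℕ → ℝ) (A B : ℝ)
    (hbound : ∀ n : ℕ, |a n| ≤ A * B ^ n)
    (hham : ∃ μ : Measure ℝ, (∀ n : ℕ, Integrable (fun x : ℝ => x ^ n) μ) ∧
      ∀ n : ℕ, a n = ∫ x : ℝ, x ^ n ∂μ) :
    (∀ μ : Measure ℝ, (∀ n : ℕ, Integrable (fun x : ℝ => x ^ n) μ) →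
      (∀ n : ℕ, a n = ∫ x : ℝ, x ^ n ∂μ) → μ (Set.Icc (-B) B)ᶜ = 0) ∧
    (∀ μ ν : Measure ℝ,
      (∀ n : ℕ, Integrable (fun x : ℝ => x ^ n) μ) →
      (∀ n : ℕ, a n = ∫ x : ℝ, x ^ n ∂μ) →
      (∀ n : ℕ, Integrable (fun x : ℝ => x ^ n) ν) →
      (∀ n : ℕ, a n = ∫ x : ℝ, x ^ n ∂ν) → μ = ν) := by
  refine ⟨fun μ h1 h2 => hb_support a A B hbound μ h1 h2, ?_⟩
  intro μ ν hμi hμm hνi hνm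
  haveI : IsFiniteMeasure μ := hb_finite μ hμi
  haveI : IsFiniteMeasure ν := hb_finite ν hνi
  have hμK := hb_support a A B hbound μ hμi hμm
  have hνK := hb_support a A B hbound ν hνi hνm
  have hm : ∀ n : ℕ, ∫ x : ℝ, x ^ n ∂μ = ∫ x : ℝ, x ^ n ∂ν :=
    fun n => (hμm n).symm.trans (hνm n)
  apply ext_of_forall_lintegral_eq_of_IsFiniteMeasure
  intro f
  have hgc : Continuous fun x : ℝ => (f x : ℝ) :=
    NNReal.continuous_coe.comp f.continuous
  have hgμ : Integrable (fun x : ℝ => (f x : ℝ)) μ :=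
    BoundedContinuousFunction.integrable_of_nnreal μ f
  have hgν : Integrable (fun x : ℝ => (f x : ℝ)) ν :=
    BoundedContinuousFunction.integrable_of_nnreal ν f
  have h := hb_integral_eq B μ ν hμK hνK hμi hνi hm _ hgc hgμ hgν
  have hμfin := BoundedContinuousFunction.lintegral_lt_top_of_nnreal μ f
  have hνfin := BoundedContinuousFunction.lintegral_lt_top_of_nnreal ν f
  rw [← ENNReal.toReal_eq_toReal_iff' hμfin.ne hνfin.ne,
    BoundedContinuousFunction.toReal_lintegral_coe_eq_integral,
    BoundedContinuousFunction.toReal_lintegral_coe_eq_integral]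
  exact h
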